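/- H_3^n(α) ≥ h((1/3) ∗ α) + (1/3)·h(α) + 2/3 + (n−2)·h(α), where a ∗ b := a(1−b) + (1−a)b. -/

import Mathlib

/-- Binary entropy function (in bits). -/
noncomputable def binEnt (a : ℝ) : ℝ :=
  -(a * Real.logb 2 a) - ((1 - a) * Real.logb 2 (1 - a))

/-- Binary convolution: `a ∗ b := a(1−b) + (1−a)b`. -/
noncomputable def convStar (a b : ℝ) : ℝ := a * (1 - b) + (1 - a) * b

/-- Shannon entropy (in bits) of a distribution `p` on a finite type. -/
noncomputable def ent {Ω : Type*} [Fintype Ω] (p : Ω → ℝ) : ℝ :=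
  ∑ x, -(p x * Real.logb 2 (p x))

/-- The distribution of `U_S ⊕ Z^n`. -/
noncomputable def bscOut {n : ℕ} (S : Finset (Fin n → Bool)) (α : ℝ)
    (y : Fin n → Bool) : ℝ :=
  (S.card : ℝ)⁻¹ * ∑ x ∈ S, ∏ i, (if y i = x i then 1 - α else α)

/-- `H_m^n(α)`. -/
noncomputable def Hmn (n m : ℕ) (α : ℝ) : ℝ :=
  sInf {h : ℝ | ∃ S : Finset (Fin n → Bool), S.card = m ∧ h = ent (bscOut S α)}

namespace H3aux
open Real Finset

noncomputable def nml (x : ℝ) : ℝ := -(x * Real.logb 2 x)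

lemma nml_eq (x : ℝ) : nml x = Real.negMulLog x / Real.log 2 := by
  simp only [nml, Real.negMulLog, Real.logb]
  ring

lemma nml_zero : nml 0 = 0 := by simp [nml]

lemma nml_one : nml 1 = 0 := by simp [nml]

lemma nml_mul (x y : ℝ) : nml (x * y) = y * nml x + x * nml y := by
  simp only [nml_eq, Real.negMulLog_mul]
  ring

lemma ent_def {Ω : Type*} [Fintype Ω] (p : Ω → ℝ) : ent p = ∑ x, nml (p x) := rfl

lemma binEnt_eq (a : ℝ) : binEnt a = nml a + nml (1 - a) := by
  simp [binEnt, nml]; ring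

lemma nml_jensen {K : Type*} [Fintype K] (w x : K → ℝ)
    (hw : ∀ k, 0 ≤ w k) (hw1 : ∑ k, w k = 1) (hx : ∀ k, 0 ≤ x k) :
    ∑ k, w k * nml (x k) ≤ nml (∑ k, w k * x k) := by
  have h := Real.concaveOn_negMulLog.le_map_sum (t := Finset.univ) (w := w) (p := x)
    (fun k _ => hw k) hw1 (fun k _ => hx k)
  simp only [smul_eq_mul] at h
  have hlog : (0:ℝ) < Real.log 2 := Real.log_pos one_lt_two
  rw [nml_eq]
  calc ∑ k, w k * nml (x k) = (∑ k, w k * Real.negMulLog (x k)) / Real.log 2 := by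
        rw [Finset.sum_div]; exact Finset.sum_congr rfl fun k _ => by rw [nml_eq]; ring
    _ ≤ Real.negMulLog (∑ k, w k * x k) / Real.log 2 := by
        apply div_le_div_of_nonneg_right h hlog.le |>.trans_eq rfl
end H3aux

namespace H3aux
open Real Finset

lemma ent_mix_ge {Ω K : Type*} [Fintype Ω] [Fintype K] (w : K → ℝ) (g : K → Ω → ℝ)
    (hw : ∀ k, 0 ≤ w k) (hw1 : ∑ k, w k = 1) (hg : ∀ k b, 0 ≤ g k b) :
    ∑ k, w k * ent (g k) ≤ ent (fun b => ∑ k, w k * g k b) := by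
  simp only [ent_def, Finset.mul_sum]
  rw [Finset.sum_comm]
  exact Finset.sum_le_sum fun b _ => nml_jensen w (fun k => g k b) hw hw1 (fun k => hg k b)

/-- Row bound: conditional entropy contribution of one row. -/
lemma row_bound {B K : Type*} [Fintype B] [Fintype K] (v : K → ℝ) (g : K → B → ℝ)
    (hv : ∀ k, 0 ≤ v k) (hg : ∀ k b, 0 ≤ g k b) (hg1 : ∀ k, ∑ b, g k b = 1) :
    nml (∑ k, v k) + ∑ k, v k * ent (g k) ≤ ∑ b, nml (∑ k, v k * g k b) := by
  set m : ℝ := ∑ k, v k with hm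
  rcases eq_or_lt_of_le (Finset.sum_nonneg (fun k _ => hv k) : (0:ℝ) ≤ m) with h0 | h0
  · -- m = 0 : all v k = 0
    have hvz : ∀ k, v k = 0 := by
      intro k
      have := (Finset.sum_eq_zero_iff_of_nonneg (fun k _ => hv k)).mp h0.symm
      exact this k (Finset.mem_univ k)
    have hm0 : m = 0 := hm.trans h0.symm
    simp [hm0, hvz, nml_zero]
  · -- m > 0
    have hmne : m ≠ 0 := ne_of_gt h0
    -- conditional pmf
    set c : B → ℝ := fun b => ∑ k, (v k / m) * g k b with hc
    have hrow : ∀ b, ∑ k, v k * g k b = m * c b := by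
      intro b
      simp only [hc, Finset.mul_sum]
      exact Finset.sum_congr rfl fun k _ => by field_simp
    have hcsum : ∑ b, c b = 1 := by
      simp only [hc]
      rw [Finset.sum_comm]
      have : ∀ k, ∑ b, (v k / m) * g k b = v k / m := by
        intro k; rw [← Finset.mul_sum, hg1 k, mul_one]
      rw [Finset.sum_congr rfl fun k _ => this k, ← Finset.sum_div, ← hm, div_self hmne]
    have hwsum : ∑ k, v k / m = 1 := by
      rw [← Finset.sum_div, ← hm, div_self hmne]
    calc nml m + ∑ k, v k * ent (g k)
        = nml m + m * ∑ k, (v k / m) * ent (g k) := by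
          congr 1
          rw [Finset.mul_sum]
          exact (Finset.sum_congr rfl fun k _ => by field_simp).symm
      _ ≤ nml m + m * ∑ b, nml (c b) := by
          have hle : ∑ k, (v k / m) * ent (g k) ≤ ∑ b, nml (c b) :=
            le_of_le_of_eq (ent_mix_ge _ _ (fun k => div_nonneg (hv k) h0.le) hwsum hg)
              (ent_def c)
          exact add_le_add_right (mul_le_mul_of_nonneg_left hle h0.le) _
      _ = ∑ b, nml (m * c b) := by
          have hcnn : ∀ b, 0 ≤ c b :=
            fun b => Finset.sum_nonneg fun k _ => mul_nonneg (div_nonneg (hv k) h0.le) (hg k b)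
          rw [Finset.sum_congr rfl fun b _ => nml_mul m (c b)]
          rw [Finset.sum_add_distrib, ← Finset.sum_mul, ← Finset.mul_sum, hcsum, one_mul]
      _ = ∑ b, nml (∑ k, v k * g k b) := by
          exact Finset.sum_congr rfl fun b _ => by rw [hrow b]

/-- Key chain-rule inequality. -/
lemma key_chain {A B K : Type*} [Fintype A] [Fintype B] [Fintype K]
    (w : K → ℝ) (f : K → A → ℝ) (g : K → B → ℝ)
    (hw : ∀ k, 0 ≤ w k) (hf : ∀ k a, 0 ≤ f k a) (hg : ∀ k b, 0 ≤ g k b)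
    (hg1 : ∀ k, ∑ b, g k b = 1) :
    ent (fun a => ∑ k, w k * f k a) + ∑ k, (w k * ∑ a, f k a) * ent (g k)
      ≤ ent (fun ab : A × B => ∑ k, w k * f k ab.1 * g k ab.2) := by
  rw [ent_def, ent_def, Fintype.sum_prod_type]
  have h1 : ∑ k, (w k * ∑ a, f k a) * ent (g k)
      = ∑ a, ∑ k, (w k * f k a) * ent (g k) := by
    rw [Finset.sum_comm]
    exact Finset.sum_congr rfl fun k _ => by rw [Finset.mul_sum, Finset.sum_mul]
  rw [h1, ← Finset.sum_add_distrib]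
  apply Finset.sum_le_sum
  intro a _
  have := row_bound (fun k => w k * f k a) g
    (fun k => mul_nonneg (hw k) (hf k a)) hg hg1
  simpa [mul_assoc] using this

lemma sum_prod_mul {A B : Type*} [Fintype A] [Fintype B] (u : A → ℝ) (v : B → ℝ) :
    ∑ ab : A × B, u ab.1 * v ab.2 = (∑ a, u a) * (∑ b, v b) := by
  rw [Fintype.sum_prod_type, Finset.sum_mul]
  exact Finset.sum_congr rfl fun a _ => by simp [Finset.mul_sum]

lemma ent_prod {A B : Type*} [Fintype A] [Fintype B] (u : A → ℝ) (v : B → ℝ)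
    (hu1 : ∑ a, u a = 1) (hv1 : ∑ b, v b = 1) :
    ent (fun ab : A × B => u ab.1 * v ab.2) = ent u + ent v := by
  rw [ent_def, ent_def, ent_def, Fintype.sum_prod_type]
  calc ∑ a, ∑ b, nml (u a * v b)
      = ∑ a, ∑ b, (v b * nml (u a) + u a * nml (v b)) :=
        Finset.sum_congr rfl fun a _ => Finset.sum_congr rfl fun b _ => nml_mul _ _
    _ = ∑ a, (nml (u a) + u a * ∑ b, nml (v b)) := by
        refine Finset.sum_congr rfl fun a _ => ?_
        rw [Finset.sum_add_distrib, ← Finset.sum_mul, hv1, one_mul, ← Finset.mul_sum]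
    _ = ∑ a, nml (u a) + ∑ b, nml (v b) := by
        rw [Finset.sum_add_distrib, ← Finset.sum_mul, hu1, one_mul]

lemma ent_comp_equiv {Ω Ω' : Type*} [Fintype Ω] [Fintype Ω'] (e : Ω ≃ Ω') (p : Ω' → ℝ) :
    ent (fun x => p (e x)) = ent p := by
  rw [ent_def, ent_def]
  exact Equiv.sum_comp e (fun x => nml (p x))

end H3aux

namespace H3aux
open Real Finset

/-- Bernoulli kernel: probability of output `b` when input is `s`. -/
noncomputable def bern (α : ℝ) (s b : Bool) : ℝ := if b = s then 1 - α else α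

lemma bern_nonneg {α : ℝ} (h0 : 0 ≤ α) (h1 : α ≤ 1) (s b : Bool) : 0 ≤ bern α s b := by
  unfold bern; split <;> linarith

lemma bern_sum (α : ℝ) (s : Bool) : ∑ b, bern α s b = 1 := by
  cases s <;> simp [bern] <;> ring

lemma ent_bool (p : Bool → ℝ) : ent p = nml (p true) + nml (p false) := by
  rw [ent_def, Fintype.sum_bool]

lemma ent_bern (α : ℝ) (s : Bool) : ent (bern α s) = binEnt α := by
  cases s <;> simp [ent_bool, bern, binEnt_eq] <;> ring

lemma sum_pi_bern {ι : Type*} [Fintype ι] [DecidableEq ι] (α : ℝ) (x : ι → Bool) :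
    ∑ y : ι → Bool, ∏ i, bern α (x i) (y i) = 1 := by
  classical
  rw [← Fintype.piFinset_univ, ← Finset.prod_univ_sum]
  exact Finset.prod_eq_one fun i _ => bern_sum α (x i)

lemma prod_split {ι : Type*} [Fintype ι] [DecidableEq ι] (i0 : ι) (F : ι → ℝ) :
    ∏ i, F i = F i0 * ∏ j : {j // j ≠ i0}, F (j : ι) := by
  rw [← Finset.mul_prod_erase Finset.univ F (Finset.mem_univ i0)]
  congr 1
  rw [Finset.prod_subtype (p := fun j => j ≠ i0) (Finset.univ.erase i0) (fun j => by simp) F]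

lemma ent_pi_bern_aux (α : ℝ) (h0 : 0 ≤ α) (h1 : α ≤ 1) : ∀ (N : ℕ) (ι : Type) (_ : Fintype ι)
    (_ : DecidableEq ι), Fintype.card ι = N → ∀ x : ι → Bool,
    ent (fun y : ι → Bool => ∏ i, bern α (x i) (y i)) = (N : ℝ) * binEnt α := by
  intro N
  induction N with
  | zero =>
    intro ι _ _ hcard x
    haveI : IsEmpty ι := Fintype.card_eq_zero_iff.mp hcard
    rw [ent_def]
    simp [nml_one]
  | succ N ih =>
    intro ι _ _ hcard x
    have hpos : 0 < Fintype.card ι := by omega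
    obtain ⟨i0⟩ := Fintype.card_pos_iff.mp hpos
    classical
    have hent := ent_comp_equiv (Equiv.funSplitAt i0 Bool)
      (fun z : Bool × ({j // j ≠ i0} → Bool) =>
        bern α (x i0) z.1 * ∏ j : {j // j ≠ i0}, bern α (x j) (z.2 j))
    have hsplit : (fun y : ι → Bool => ∏ i, bern α (x i) (y i))
        = fun y => (fun z : Bool × ({j // j ≠ i0} → Bool) =>
            bern α (x i0) z.1 * ∏ j : {j // j ≠ i0}, bern α (x j) (z.2 j))
            (Equiv.funSplitAt i0 Bool y) := by
      funext y
      exact prod_split i0 _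
    rw [hsplit, hent, ent_prod _ _ (bern_sum α (x i0)) (sum_pi_bern α _)]
    have hcard' : Fintype.card {j // j ≠ i0} = N := by
      rw [Fintype.card_subtype_compl]
      simp [hcard]
    rw [ent_bern, ih {j // j ≠ i0} _ _ hcard' (fun j => x j)]
    push_cast
    ring

lemma ent_pi_bern {ι : Type} [Fintype ι] [DecidableEq ι] (α : ℝ) (h0 : 0 ≤ α) (h1 : α ≤ 1)
    (x : ι → Bool) :
    ent (fun y : ι → Bool => ∏ i, bern α (x i) (y i)) = (Fintype.card ι : ℝ) * binEnt α :=
  ent_pi_bern_aux α h0 h1 (Fintype.card ι) ι _ _ rfl x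

end H3aux

namespace H3aux
open Real Finset

lemma nml_half : nml (2⁻¹ : ℝ) = 2⁻¹ := by
  rw [nml, Real.logb_inv, Real.logb_self_eq_one (by norm_num)]
  norm_num

lemma binEnt_of_pair (p : Bool → ℝ) (q : ℝ)
    (h : p true = q ∧ p false = 1 - q ∨ p true = 1 - q ∧ p false = q) :
    ent p = binEnt q := by
  rw [ent_bool, binEnt_eq]
  rcases h with ⟨h1, h2⟩ | ⟨h1, h2⟩ <;> rw [h1, h2] <;> ring

lemma bern_sum2 (α : ℝ) (s : Bool) : bern α s true + bern α s false = 1 := by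
  have := bern_sum α s
  rwa [Fintype.sum_bool] at this

lemma bern_add_not (α : ℝ) (s b : Bool) : bern α s b + bern α (!s) b = 1 := by
  cases s <;> cases b <;> simp [bern] <;> ring

lemma main_bound {n : ℕ} (hn : 2 ≤ n) (α : ℝ) (h0 : 0 ≤ α) (h1 : α ≤ 1/2)
    (x0 x1 x2 : Fin n → Bool) (i1 i2 : Fin n) (hne : i2 ≠ i1)
    (hmin : x0 i1 ≠ x1 i1) (hmaj : x1 i1 = x2 i1) (hdiff : x1 i2 ≠ x2 i2) :
    binEnt (convStar (1/3) α) + (1/3) * binEnt α + 2/3 + ((n : ℝ) - 2) * binEnt α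
      ≤ ent (fun y : Fin n → Bool =>
          (3:ℝ)⁻¹ * ((∏ i, bern α (x0 i) (y i)) + (∏ i, bern α (x1 i) (y i))
            + (∏ i, bern α (x2 i) (y i))) ) := by
  classical
  have h1' : α ≤ 1 := by linarith
  set S1 := {j : Fin n // j ≠ i1} with hS1
  set i2' : S1 := ⟨i2, hne⟩ with hi2'
  set R := {j : S1 // j ≠ i2'} with hR
  -- cardinality of R
  have hcardS1 : Fintype.card S1 = n - 1 := by
    show Fintype.card {j : Fin n // j ≠ i1} = n - 1
    rw [Fintype.card_subtype_compl, Fintype.card_subtype_eq, Fintype.card_fin]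
  have hcardR : Fintype.card R = n - 2 := by
    show Fintype.card {j : S1 // j ≠ i2'} = n - 2
    rw [Fintype.card_subtype_compl, Fintype.card_subtype_eq, hcardS1]
    omega
  have hcastR : ((Fintype.card R : ℕ) : ℝ) = (n : ℝ) - 2 := by
    rw [hcardR]
    push_cast [Nat.cast_sub hn]
    ring
  -- the three kernels
  set β0 : Bool → ℝ := bern α (x0 i1) with hβ0
  set β1 : Bool → ℝ := bern α (x1 i1) with hβ1
  set γ0 : Bool → ℝ := bern α (x0 i2) with hγ0
  set γ1 : Bool → ℝ := bern α (x1 i2) with hγ1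
  set γ2 : Bool → ℝ := bern α (x2 i2) with hγ2
  set ρ0 : (R → Bool) → ℝ := fun r => ∏ j : R, bern α (x0 j) (r j) with hρ0
  set ρ1 : (R → Bool) → ℝ := fun r => ∏ j : R, bern α (x1 j) (r j) with hρ1
  set ρ2 : (R → Bool) → ℝ := fun r => ∏ j : R, bern α (x2 j) (r j) with hρ2
  have hρ0sum : ∑ r : R → Bool, ρ0 r = 1 := sum_pi_bern α _
  have hρ1sum : ∑ r : R → Bool, ρ1 r = 1 := sum_pi_bern α _
  have hρ2sum : ∑ r : R → Bool, ρ2 r = 1 := sum_pi_bern α _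
  have hρ0ent : ent ρ0 = ((n:ℝ) - 2) * binEnt α := by
    rw [hρ0, ent_pi_bern α h0 h1' _, hcastR]
  have hρ1ent : ent ρ1 = ((n:ℝ) - 2) * binEnt α := by
    rw [hρ1, ent_pi_bern α h0 h1' _, hcastR]
  have hρ2ent : ent ρ2 = ((n:ℝ) - 2) * binEnt α := by
    rw [hρ2, ent_pi_bern α h0 h1' _, hcastR]
  -- the equivalence
  set e : (Fin n → Bool) ≃ Bool × (Bool × (R → Bool)) :=
    (Equiv.funSplitAt i1 Bool).trans
      ((Equiv.refl Bool).prodCongr (Equiv.funSplitAt i2' Bool)) with he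
  set q' : Bool × (Bool × (R → Bool)) → ℝ := fun z =>
    (3:ℝ)⁻¹ * (β0 z.1 * (γ0 z.2.1 * ρ0 z.2.2) + β1 z.1 * (γ1 z.2.1 * ρ1 z.2.2)
      + bern α (x2 i1) z.1 * (γ2 z.2.1 * ρ2 z.2.2)) with hq'def
  have hsplitP : ∀ x : Fin n → Bool, ∀ y : Fin n → Bool,
      (∏ i, bern α (x i) (y i))
        = bern α (x i1) (y i1) * (bern α (x i2) (y i2) * ∏ j : R, bern α (x j) (y j)) := by
    intro x y
    rw [prod_split i1 (fun i => bern α (x i) (y i))]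
    congr 1
    exact prod_split i2' (fun j : S1 => bern α (x j) (y j))
  have hq : (fun y : Fin n → Bool =>
      (3:ℝ)⁻¹ * ((∏ i, bern α (x0 i) (y i)) + (∏ i, bern α (x1 i) (y i))
        + (∏ i, bern α (x2 i) (y i)))) = fun y => q' (e y) := by
    funext y
    rw [hsplitP x0 y, hsplitP x1 y, hsplitP x2 y]
    rfl
  rw [hq, ent_comp_equiv e q']
  -- Step 1: chain bound grouping components 1,2
  set g0 : Bool × (R → Bool) → ℝ := fun z => γ0 z.1 * ρ0 z.2 with hg0
  set gmix : Bool × (R → Bool) → ℝ := fun z =>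
    (2:ℝ)⁻¹ * (γ1 z.1 * ρ1 z.2) + (2:ℝ)⁻¹ * (γ2 z.1 * ρ2 z.2) with hgmix
  set w : Bool → ℝ := fun k => if k then 2/3 else 1/3 with hw
  set f : Bool → Bool → ℝ := fun k => if k then β1 else β0 with hf
  set g : Bool → Bool × (R → Bool) → ℝ := fun k => if k then gmix else g0 with hg
  have hbnn : ∀ s b : Bool, 0 ≤ bern α s b := bern_nonneg h0 h1'
  have hρ0nn : ∀ r, 0 ≤ ρ0 r := by
    intro r; simp only [hρ0]; exact Finset.prod_nonneg fun j _ => hbnn _ _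
  have hρ1nn : ∀ r, 0 ≤ ρ1 r := by
    intro r; simp only [hρ1]; exact Finset.prod_nonneg fun j _ => hbnn _ _
  have hρ2nn : ∀ r, 0 ≤ ρ2 r := by
    intro r; simp only [hρ2]; exact Finset.prod_nonneg fun j _ => hbnn _ _
  have hkey1 := key_chain w f g
    (by intro k; cases k <;> simp [hw] <;> norm_num)
    (by intro k a
        cases k
        · simpa [hf] using hbnn _ a
        · simpa [hf] using hbnn _ a)
    (by intro k b
        cases k
        · simpa [hg, hg0] using mul_nonneg (hbnn _ _) (hρ0nn _)
        · simp only [hg, hgmix, if_true]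
          have := mul_nonneg (hbnn (x1 i2) b.1) (hρ1nn b.2)
          have := mul_nonneg (hbnn (x2 i2) b.1) (hρ2nn b.2)
          simp only [hγ1, hγ2] at *
          nlinarith)
    (by intro k
        cases k
        · simp only [hg, hg0, Bool.cond_false, if_neg Bool.false_ne_true]
          rw [sum_prod_mul, hγ0, bern_sum, hρ0sum]; norm_num
        · simp only [hg, hgmix, if_true]
          rw [Finset.sum_add_distrib, ← Finset.mul_sum, ← Finset.mul_sum,
            sum_prod_mul, sum_prod_mul, hγ1, hγ2, bern_sum, bern_sum, hρ1sum, hρ2sum]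
          norm_num)
  -- value of the first marginal
  set c := convStar (1/3) α with hc
  have hx1i : x1 i1 = !(x0 i1) := by revert hmin; cases x0 i1 <;> cases x1 i1 <;> simp
  have hx2i : x2 i2 = !(x1 i2) := by revert hdiff; cases x1 i2 <;> cases x2 i2 <;> simp
  have hval : ∀ b, (∑ k : Bool, w k * f k b)
      = (2/3) * bern α (x1 i1) b + (1/3) * bern α (x0 i1) b := by
    intro b; rw [Fintype.sum_bool]; simp [hw, hf, hβ0, hβ1]
  have hentm : ent (fun b => ∑ k : Bool, w k * f k b) = binEnt c := by
    apply binEnt_of_pair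
    cases hb : x0 i1
    · right
      constructor
      · rw [hval true, hx1i, hb, hc]
        first
        | (simp [bern, convStar]; ring)
        | simp [bern, convStar]
      · rw [hval false, hx1i, hb, hc]
        first
        | (simp [bern, convStar]; ring)
        | simp [bern, convStar]
    · left
      constructor
      · rw [hval true, hx1i, hb, hc]
        first
        | (simp [bern, convStar]; ring)
        | simp [bern, convStar]
      · rw [hval false, hx1i, hb, hc]
        first
        | (simp [bern, convStar]; ring)
        | simp [bern, convStar]
  have hsum1 : ∑ k : Bool, (w k * ∑ a, f k a) * ent (g k)
      = (2/3) * ent gmix + (1/3) * ent g0 := by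
    rw [Fintype.sum_bool]
    simp [hw, hf, hg, hβ0, hβ1, bern_sum2]
  have hentg0 : ent g0 = binEnt α + ((n:ℝ) - 2) * binEnt α := by
    rw [hg0, ent_prod γ0 ρ0 (by rw [hγ0]; exact bern_sum α _) hρ0sum, hγ0, ent_bern, hρ0ent]
  -- Step 2: chain bound inside the mixed component
  set w2 : Bool → ℝ := fun _ => 2⁻¹ with hw2
  set f2 : Bool → Bool → ℝ := fun k => if k then γ2 else γ1 with hf2
  set g2 : Bool → (R → Bool) → ℝ := fun k => if k then ρ2 else ρ1 with hg2
  have hkey2 := key_chain w2 f2 g2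
    (by intro k; norm_num [hw2])
    (by intro k a
        cases k
        · simpa [hf2, hγ1] using hbnn _ a
        · simpa [hf2, hγ2] using hbnn _ a)
    (by intro k b
        cases k
        · simpa [hg2] using hρ1nn b
        · simpa [hg2] using hρ2nn b)
    (by intro k; cases k
        · simpa [hg2] using hρ1sum
        · simpa [hg2] using hρ2sum)
  have hmix_eq : gmix = fun ab : Bool × (R → Bool) =>
      ∑ k : Bool, w2 k * f2 k ab.1 * g2 k ab.2 := by
    funext z
    rw [Fintype.sum_bool]
    simp only [hgmix, hw2, hf2, hg2, if_true, Bool.false_eq_true, if_false]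
    ring
  have hmarg2 : ∀ b, (∑ k : Bool, w2 k * f2 k b) = 2⁻¹ := by
    intro b
    rw [Fintype.sum_bool]
    simp only [hw2, hf2, if_true, Bool.false_eq_true, if_false, hγ1, hγ2, hx2i]
    have := bern_add_not α (x1 i2) b
    linarith
  have hentm2 : ent (fun b => ∑ k : Bool, w2 k * f2 k b) = 1 := by
    rw [ent_bool]
    show nml (∑ k : Bool, w2 k * f2 k true) + nml (∑ k : Bool, w2 k * f2 k false) = 1
    rw [hmarg2 true, hmarg2 false, nml_half]
    norm_num
  have hsum2 : ∑ k : Bool, (w2 k * ∑ a, f2 k a) * ent (g2 k)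
      = 2⁻¹ * ent ρ2 + 2⁻¹ * ent ρ1 := by
    rw [Fintype.sum_bool]
    simp [hw2, hf2, hg2, hγ1, hγ2, bern_sum2]
  have hgmixge : 1 + ((n:ℝ) - 2) * binEnt α ≤ ent gmix := by
    rw [hmix_eq]
    rw [hentm2, hsum2, hρ1ent, hρ2ent] at hkey2
    calc 1 + ((n:ℝ) - 2) * binEnt α
        = 1 + (2⁻¹ * (((n:ℝ) - 2) * binEnt α) + 2⁻¹ * (((n:ℝ) - 2) * binEnt α)) := by ring
      _ ≤ _ := hkey2
  -- assemble
  have hq'eq : q' = fun ab : Bool × (Bool × (R → Bool)) =>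
      ∑ k : Bool, w k * f k ab.1 * g k ab.2 := by
    funext z
    rw [Fintype.sum_bool]
    simp only [hq'def, hw, hf, hg, hgmix, hg0, hβ0, hβ1, ← hmaj, if_true,
      Bool.false_eq_true, if_false]
    ring
  rw [hq'eq]
  rw [hentm, hsum1, hentg0] at hkey1
  linarith
/-- Relabel three distinct points so that one is the minority at some coordinate. -/
lemma exists_labeling {n : ℕ} (a b c : Fin n → Bool) (hab : a ≠ b) (hac : a ≠ c)
    (hbc : b ≠ c) :
    ∃ (x0 x1 x2 : Fin n → Bool) (i1 i2 : Fin n), i2 ≠ i1 ∧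
      x0 i1 ≠ x1 i1 ∧ x1 i1 = x2 i1 ∧ x1 i2 ≠ x2 i2 ∧
      ({x0, x1, x2} : Finset (Fin n → Bool)) = {a, b, c} := by
  obtain ⟨i, hi⟩ := Function.ne_iff.mp hab
  by_cases hca : c i = a i
  · -- minority is b at i
    have h01 : b i ≠ a i := Ne.symm hi
    have hac' : a ≠ c := hac
    obtain ⟨j, hj⟩ := Function.ne_iff.mp hac'
    have hji : j ≠ i := by
      intro h; subst h; exact hj hca.symm
    refine ⟨b, a, c, i, j, hji, h01, hca.symm, hj, ?_⟩
    ext z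
    simp [Finset.mem_insert]
    tauto
  · -- c i = b i (Bool), minority is a at i
    have hcb : c i = b i := by
      revert hi hca; cases a i <;> cases b i <;> cases c i <;> simp
    obtain ⟨j, hj⟩ := Function.ne_iff.mp hbc
    have hji : j ≠ i := by
      intro h; subst h; exact hj hcb.symm
    refine ⟨a, b, c, i, j, hji, hi, hcb.symm, hj, ?_⟩
    ext z
    simp [Finset.mem_insert]

lemma ent_bscOut_ge {n : ℕ} (hn : 2 ≤ n) (α : ℝ) (h0 : 0 ≤ α) (h1 : α ≤ 1/2)
    (S : Finset (Fin n → Bool)) (hS : S.card = 3) :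
    binEnt (convStar (1/3) α) + (1/3) * binEnt α + 2/3 + ((n : ℝ) - 2) * binEnt α
      ≤ ent (bscOut S α) := by
  classical
  obtain ⟨a, b, c, hab, hac, hbc, hSe⟩ := Finset.card_eq_three.mp hS
  obtain ⟨x0, x1, x2, i1, i2, hne, hmin, hmaj, hdiff, hset⟩ :=
    exists_labeling a b c hab hac hbc
  have hx01 : x0 ≠ x1 := fun h => hmin (by rw [h])
  have hx12 : x1 ≠ x2 := fun h => hdiff (by rw [h])
  have hx02 : x0 ≠ x2 := fun h => hmin (by rw [h, ← hmaj])
  have hbsc : bscOut S α = fun y : Fin n → Bool =>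
      (3:ℝ)⁻¹ * ((∏ i, bern α (x0 i) (y i)) + (∏ i, bern α (x1 i) (y i))
        + (∏ i, bern α (x2 i) (y i))) := by
    funext y
    rw [bscOut, hS, hSe, ← hset]
    rw [Finset.sum_insert (by simp [hx01, hx02]),
      Finset.sum_insert (by simp [hx12]), Finset.sum_singleton]
    simp only [bern]
    norm_num
    ring
  rw [hbsc]
  exact main_bound hn α h0 h1 x0 x1 x2 i1 i2 hne hmin hmaj hdiff

end H3aux

theorem H3_lower_bound (n : ℕ) (hn : 2 ≤ n) (α : ℝ)
    (hα : α ∈ Set.Icc (0:ℝ) (1/2)) :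
    binEnt (convStar (1/3) α) + (1/3) * binEnt α + 2/3 + ((n : ℝ) - 2) * binEnt α ≤
      Hmn n 3 α := by
  obtain ⟨h0, h1⟩ := hα
  apply le_csInf
  · have hcard : 3 ≤ Fintype.card (Fin n → Bool) := by
      rw [Fintype.card_fun, Fintype.card_fin, Fintype.card_bool]
      calc 3 ≤ 2 ^ 2 := by norm_num
        _ ≤ 2 ^ n := Nat.pow_le_pow_right (by norm_num) hn
    obtain ⟨S, -, hS⟩ := Finset.exists_subset_card_eq
      (s := (Finset.univ : Finset (Fin n → Bool))) (by simpa using hcard)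
    exact ⟨_, S, hS, rfl⟩
  · rintro x ⟨S, hS3, rfl⟩
    exact H3aux.ent_bscOut_ge hn α h0 h1 S hS3
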